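/- Let $g_1, h_1, g_2, h_2 \in \mathrm{SU}(2)$ with $[g_1,h_1][g_2,h_2] = I$, where $[a,b] = aba^{-1}b^{-1}$. Let $X = h_2h_1 - (h_2h_1)^{-1}$, $Y = h_1h_2 - (h_1h_2)^{-1}$. Then for all real $t$: $[e^{tX}g_1, h_1][e^{tY}g_2, h_2] = I$. -/

import Mathlib

open Matrix Complex

abbrev M2 := Matrix (Fin 2) (Fin 2) ℂ

abbrev SU2 : Submonoid M2 := Matrix.specialUnitaryGroup (Fin 2) ℂ

private lemma units_key (E F a b c d : M2ˣ)
    (hr : a * b * a⁻¹ * b⁻¹ * (c * d * c⁻¹ * d⁻¹) = 1)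
    (hbF : E⁻¹ * b⁻¹ = b⁻¹ * F⁻¹) (hdE : F⁻¹ * d⁻¹ = d⁻¹ * E⁻¹) :
    E * a * b * (E * a)⁻¹ * b⁻¹ * (F * c * d * (F * c)⁻¹ * d⁻¹) = 1 := by
  calc E * a * b * (E * a)⁻¹ * b⁻¹ * (F * c * d * (F * c)⁻¹ * d⁻¹)
      = E * a * b * a⁻¹ * (E⁻¹ * b⁻¹) * (F * c * d * c⁻¹ * (F⁻¹ * d⁻¹)) := by group
    _ = E * a * b * a⁻¹ * (b⁻¹ * F⁻¹) * (F * c * d * c⁻¹ * (d⁻¹ * E⁻¹)) := by rw [hbF, hdE]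
    _ = E * (a * b * a⁻¹ * b⁻¹ * (c * d * c⁻¹ * d⁻¹)) * E⁻¹ := by group
    _ = E * 1 * E⁻¹ := by rw [hr]
    _ = 1 := by group

theorem stmt3 (g1 h1 g2 h2 : M2)
    (hg1 : g1 ∈ SU2) (hh1 : h1 ∈ SU2) (hg2 : g2 ∈ SU2) (hh2 : h2 ∈ SU2)
    (hrel : (g1 * h1 * g1⁻¹ * h1⁻¹) * (g2 * h2 * g2⁻¹ * h2⁻¹) = 1)
    (X Y : M2) (hX : X = h2 * h1 - (h2 * h1)⁻¹) (hY : Y = h1 * h2 - (h1 * h2)⁻¹)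
    (t : ℝ) :
    (NormedSpace.exp ((t : ℂ) • X) * g1 * h1 * (NormedSpace.exp ((t : ℂ) • X) * g1)⁻¹ * h1⁻¹) *
      (NormedSpace.exp ((t : ℂ) • Y) * g2 * h2 * (NormedSpace.exp ((t : ℂ) • Y) * g2)⁻¹ * h2⁻¹) = 1 := by
  have ug1 : IsUnit g1 := (Matrix.isUnit_iff_isUnit_det _).2 (by
    rw [((Matrix.mem_specialUnitaryGroup_iff).1 hg1).2]; exact isUnit_one)
  have uh1 : IsUnit h1 := (Matrix.isUnit_iff_isUnit_det _).2 (by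
    rw [((Matrix.mem_specialUnitaryGroup_iff).1 hh1).2]; exact isUnit_one)
  have ug2 : IsUnit g2 := (Matrix.isUnit_iff_isUnit_det _).2 (by
    rw [((Matrix.mem_specialUnitaryGroup_iff).1 hg2).2]; exact isUnit_one)
  have uh2 : IsUnit h2 := (Matrix.isUnit_iff_isUnit_det _).2 (by
    rw [((Matrix.mem_specialUnitaryGroup_iff).1 hh2).2]; exact isUnit_one)
  set E := NormedSpace.exp ((t : ℂ) • X) with hE
  set F := NormedSpace.exp ((t : ℂ) • Y) with hF
  have uE : IsUnit E := Matrix.isUnit_exp _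
  have uF : IsUnit F := Matrix.isUnit_exp _
  have h2inv : h2⁻¹ * h2 = 1 := Matrix.nonsing_inv_mul _ ((Matrix.isUnit_iff_isUnit_det _).1 uh2)
  have h1inv : h1⁻¹ * h1 = 1 := Matrix.nonsing_inv_mul _ ((Matrix.isUnit_iff_isUnit_det _).1 uh1)
  have h2inv' : h2 * h2⁻¹ = 1 := Matrix.mul_nonsing_inv _ ((Matrix.isUnit_iff_isUnit_det _).1 uh2)
  have h1inv' : h1 * h1⁻¹ = 1 := Matrix.mul_nonsing_inv _ ((Matrix.isUnit_iff_isUnit_det _).1 uh1)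
  -- conjugation relations
  have hYX : (t : ℂ) • Y = h2⁻¹ * ((t : ℂ) • X) * h2 := by
    rw [hX, hY, Matrix.mul_smul, Matrix.smul_mul]
    congr 1
    rw [mul_sub, sub_mul, Matrix.mul_inv_rev, Matrix.mul_inv_rev]
    congr 1
    · simp [← mul_assoc, h2inv]
    · simp [mul_assoc, h2inv]
  have hXY : (t : ℂ) • X = h1⁻¹ * ((t : ℂ) • Y) * h1 := by
    rw [hX, hY, Matrix.mul_smul, Matrix.smul_mul]
    congr 1
    rw [mul_sub, sub_mul, Matrix.mul_inv_rev, Matrix.mul_inv_rev]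
    congr 1
    · simp [← mul_assoc, h1inv]
    · simp [mul_assoc, h1inv]
  have hEh2 : E * h2 = h2 * F := by
    rw [hF, hYX, Matrix.exp_conj' h2 _ uh2, ← mul_assoc, ← mul_assoc, h2inv', one_mul, ← hE]
  have hFh1 : F * h1 = h1 * E := by
    rw [hE, hXY, Matrix.exp_conj' h1 _ uh1, ← mul_assoc, ← mul_assoc, h1inv', one_mul, ← hF]
  -- pass to units
  have key := units_key uE.unit uF.unit ug1.unit uh1.unit ug2.unit uh2.unit
    (by
      apply Units.ext
      simp only [Units.val_mul, Units.val_one, Matrix.coe_units_inv, IsUnit.unit_spec]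
      exact hrel)
    (by
      apply Units.ext
      simp only [Units.val_mul, Matrix.coe_units_inv, IsUnit.unit_spec]
      rw [← Matrix.mul_inv_rev, ← Matrix.mul_inv_rev, hFh1])
    (by
      apply Units.ext
      simp only [Units.val_mul, Matrix.coe_units_inv, IsUnit.unit_spec]
      rw [← Matrix.mul_inv_rev, ← Matrix.mul_inv_rev, hEh2])
  have hk := congrArg (Units.val) key
  simp only [Units.val_mul, Units.val_one, Matrix.coe_units_inv, IsUnit.unit_spec] at hk
  exact hk
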